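/- Let I ⊆ C be a finite subset with card(I) = N ≥ 1 and fix an element i_0 ∈ I. Then the (N−1)! rational functions E_{vI}(t_I), where vI ranges over the sequences in Seq(I) whose first element is i_0, are linearly independent over ℂ, and every function E_{vJ}(t_I), vJ ∈ Seq(I), is a ℂ-linear combination of them. -/

import Mathlib

/- STATEMENT 9.
Fix a finite index set `C` and a finite subset `I ⊆ C` with `card(I) = N ≥ 1`, realized as the
set of entries of a nonempty nodup list `vL`; `Seq(I)` is the set of permutations of `vL`, and
`i₀ ∈ I`.  The theorem: the `(N−1)!` functions `E_{vI}(t_I)` with `vI ∈ Seq(I)` starting at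
`i₀` are linearly independent over ℂ, and every `E_{vJ}(t_I)`, `vJ ∈ Seq(I)`, lies in their
ℂ-span. -/

noncomputable section

abbrev FF (C : Type) := FractionRing (MvPolynomial C ℂ)

def tv {C : Type} (i : C) : FF C := algebraMap (MvPolynomial C ℂ) (FF C) (MvPolynomial.X i)

/-- Auxiliary product: `Eaux w [i₁,…,i_N] = 1/(t_{i₁} − w) · ∏_{j=2}^N 1/(t_{i_j} − t_{i_{j−1}})`. -/
def Eaux {C : Type} (w : FF C) : List C → FF C
  | [] => 1
  | i :: tl => (tv i - w)⁻¹ * Eaux (tv i) tl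

/-- `E_{vI}(t_I) = ∏_{j=2}^N 1/(t_{i_j} − t_{i_{j−1}})` for `vI = (i₁,…,i_N)`. -/
def Eplain {C : Type} : List C → FF C
  | [] => 1
  | i :: tl => Eaux (tv i) tl

set_option linter.unusedSectionVars false
set_option linter.unusedVariables false

variable {C : Type}

lemma tv_sub_ne_zero {i j : C} (h : i ≠ j) : tv i - tv j ≠ 0 := by
  have h1 : (MvPolynomial.X i : MvPolynomial C ℂ) - MvPolynomial.X j ≠ 0 :=
    sub_ne_zero.mpr (fun he => h (MvPolynomial.X_injective he))
  have : tv i - tv j = algebraMap (MvPolynomial C ℂ) (FF C)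
      (MvPolynomial.X i - MvPolynomial.X j) := by simp [tv, map_sub]
  rw [this]
  exact fun h0 => h1 ((map_eq_zero_iff _ (IsFractionRing.injective _ _)).mp h0)

lemma Eaux_append_cons (w : FF C) (p : List C) (x : C) (m : List C) :
    Eaux w (p ++ x :: m) = Eaux w (p ++ [x]) * Eaux (tv x) m := by
  induction p generalizing w with
  | nil => simp [Eaux]
  | cons a p ih =>
    simp only [List.cons_append]
    rw [Eaux, Eaux, ih, mul_assoc]

def delC (x j : C) (q : List C) : FF C :=
  (tv j - tv x)⁻¹ + match q.head? with | none => 0 | some y => (tv y - tv j)⁻¹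

lemma del_core (x j : C) (q : List C) (hxj : j ≠ x)
    (hq : ∀ y ∈ q.head?, y ≠ j ∧ y ≠ x) :
    Eaux (tv x) (j :: q) = delC x j q * Eaux (tv x) q := by
  cases q with
  | nil => simp [Eaux, delC]
  | cons y q' =>
    obtain ⟨h1, h2⟩ := hq y rfl
    have ha : tv j - tv x ≠ 0 := tv_sub_ne_zero hxj
    have hb : tv y - tv j ≠ 0 := tv_sub_ne_zero h1
    have hc : tv y - tv x ≠ 0 := tv_sub_ne_zero h2
    have key : (tv j - tv x)⁻¹ * (tv y - tv j)⁻¹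
        = ((tv j - tv x)⁻¹ + (tv y - tv j)⁻¹) * (tv y - tv x)⁻¹ := by
      field_simp
      ring
    have hd : delC x j (y :: q') = (tv j - tv x)⁻¹ + (tv y - tv j)⁻¹ := by
      simp [delC]
    have lhs : Eaux (tv x) (j :: y :: q') = (tv j - tv x)⁻¹ * ((tv y - tv j)⁻¹ * Eaux (tv y) q') := rfl
    have rhs : Eaux (tv x) (y :: q') = (tv y - tv x)⁻¹ * Eaux (tv y) q' := rfl
    rw [lhs, rhs, hd, ← mul_assoc, key, mul_assoc]

lemma del_id (a : C) (p : List C) (j : C) (q : List C)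
    (hnd : (a :: (p ++ j :: q)).Nodup) :
    Eplain (a :: (p ++ j :: q)) = delC (p.getLastD a) j q * Eplain (a :: (p ++ q)) := by
  -- distinctness facts
  have hx_mem : p.getLastD a ∈ a :: p := List.getLastD_mem_cons
  have hsplit : (a :: (p ++ j :: q)) = (a :: p) ++ (j :: q) := by simp
  have hnd' : ((a :: p) ++ (j :: q)).Nodup := by rw [← hsplit]; exact hnd
  have hdisj : List.Disjoint (a :: p) (j :: q) := List.disjoint_of_nodup_append hnd'
  have hndq : (j :: q).Nodup := (List.nodup_append.mp hnd').2.1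
  have hxj : j ≠ p.getLastD a := by
    intro he; exact hdisj hx_mem (he ▸ (List.mem_cons_self : j ∈ j :: q))
  have hq : ∀ y ∈ q.head?, y ≠ j ∧ y ≠ p.getLastD a := by
    intro y hy
    have hyq : y ∈ q := List.mem_of_mem_head? hy
    constructor
    · intro he; exact (List.nodup_cons.mp hndq).1 (he ▸ hyq)
    · intro he; exact hdisj (he ▸ hx_mem) (List.mem_cons_of_mem j hyq)
  rcases List.eq_nil_or_concat p with rfl | ⟨p', x, hp⟩
  · show Eaux (tv a) (j :: q) = _
    simpa [Eplain] using del_core a j q hxj hq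
  · rw [List.concat_eq_append] at hp
    subst hp
    have hlast : (p' ++ [x]).getLastD a = x := by
      simp [List.getLastD_eq_getLast?, List.getLast?_concat]
    rw [hlast] at hxj hq ⊢
    show Eaux (tv a) ((p' ++ [x]) ++ j :: q) = _ * Eaux (tv a) ((p' ++ [x]) ++ q)
    have e1 : (p' ++ [x]) ++ j :: q = p' ++ (x :: (j :: q)) := by simp
    have e2 : (p' ++ [x]) ++ q = p' ++ (x :: q) := by simp
    rw [e1, e2, Eaux_append_cons (tv a) p' x (j :: q), Eaux_append_cons (tv a) p' x q,
      del_core x j q hxj hq]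
    ring

set_option maxHeartbeats 1000000
set_option synthInstance.maxHeartbeats 400000

section Phi

variable [DecidableEq C] (i0 : C)

abbrev Amv (i0 : C) := MvPolynomial {c : C // c ≠ i0} ℂ

abbrev Lf (i0 : C) := FractionRing (Amv i0)

def psi : Amv i0 →+* MvPolynomial C ℂ :=
  (MvPolynomial.rename (Subtype.val : {c : C // c ≠ i0} → C)).toRingHom

def gmap : Amv i0 →+* FF C :=
  (algebraMap (MvPolynomial C ℂ) (FF C)).comp (psi i0)

lemma gmap_injective : Function.Injective (gmap i0) := by
  have h : ⇑(gmap i0) = ⇑(algebraMap (MvPolynomial C ℂ) (FF C))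
      ∘ ⇑(MvPolynomial.rename (Subtype.val : {c : C // c ≠ i0} → C)) := rfl
  rw [h]
  exact (IsFractionRing.injective _ _).comp
    (MvPolynomial.rename_injective _ Subtype.val_injective)

def phi : Lf i0 →+* FF C := IsFractionRing.lift (gmap_injective i0)

lemma phi_algebraMap (x : Amv i0) :
    phi i0 (algebraMap (Amv i0) (Lf i0) x) = algebraMap (MvPolynomial C ℂ) (FF C) (psi i0 x) :=
  IsFractionRing.lift_algebraMap _ _

lemma phi_comp_algebraMap : (phi i0).comp (algebraMap (Amv i0) (Lf i0)) = gmap i0 :=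
  RingHom.ext fun x => phi_algebraMap i0 x

lemma tv_eq_phi (j : C) (h : j ≠ i0) :
    tv j = phi i0 (algebraMap (Amv i0) (Lf i0) (MvPolynomial.X ⟨j, h⟩)) := by
  rw [phi_algebraMap]
  simp [psi, tv]

def iota : Polynomial (Lf i0) →+* FF C := Polynomial.eval₂RingHom (phi i0) (tv i0)

lemma theta_injective :
    Function.Injective (Polynomial.eval₂RingHom (psi i0) (MvPolynomial.X i0)) := by
  set Θ := Polynomial.eval₂RingHom (psi i0) (MvPolynomial.X i0)
  set ρ : MvPolynomial C ℂ →+* Polynomial (Amv i0) :=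
    MvPolynomial.eval₂Hom (Polynomial.C.comp MvPolynomial.C)
      (fun c => if h : c = i0 then Polynomial.X else Polynomial.C (MvPolynomial.X ⟨c, h⟩)) with hρ
  have hretr : ∀ q, ρ (Θ q) = q := by
    intro q
    have h1 : ρ (Θ q) = Polynomial.eval₂ (ρ.comp (psi i0)) (ρ (MvPolynomial.X i0)) q :=
      Polynomial.hom_eval₂ q (psi i0) ρ (MvPolynomial.X i0)
    have h2 : ρ (MvPolynomial.X i0) = Polynomial.X := by
      rw [hρ]; simp
    have h3 : ρ.comp (psi i0) = Polynomial.C := by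
      apply MvPolynomial.ringHom_ext
      · intro r
        simp [psi, hρ]
      · intro s
        simp only [RingHom.comp_apply, psi, AlgHom.toRingHom_eq_coe, RingHom.coe_coe,
          MvPolynomial.rename_X, hρ, MvPolynomial.eval₂Hom_X']
        rw [dif_neg s.prop]
    rw [h1, h2, h3, Polynomial.eval₂_C_X]
  intro a b hab
  have := congrArg ρ hab
  rwa [hretr, hretr] at this

lemma iota_injective : Function.Injective (iota i0) := by
  rw [injective_iff_map_eq_zero]
  intro p hp
  obtain ⟨b, hb⟩ := IsLocalization.integerNormalization_map_to_map
    (nonZeroDivisors (Amv i0)) p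
  set q := IsLocalization.integerNormalization (nonZeroDivisors (Amv i0)) p with hq
  have h1 : iota i0 (q.map (algebraMap (Amv i0) (Lf i0)))
      = Polynomial.eval₂ (gmap i0) (tv i0) q := by
    rw [iota, Polynomial.coe_eval₂RingHom, Polynomial.eval₂_map, phi_comp_algebraMap]
  have h2 : Polynomial.eval₂ (gmap i0) (tv i0) q
      = algebraMap (MvPolynomial C ℂ) (FF C) (Polynomial.eval₂ (psi i0) (MvPolynomial.X i0) q) := by
    rw [gmap]
    exact (Polynomial.hom_eval₂ q (psi i0) (algebraMap (MvPolynomial C ℂ) (FF C))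
      (MvPolynomial.X i0)).symm
  have h3 : iota i0 (q.map (algebraMap (Amv i0) (Lf i0))) = 0 := by
    rw [hb]
    rw [← IsScalarTower.algebraMap_smul (Lf i0) (b : Amv i0) p, Polynomial.smul_eq_C_mul,
      map_mul, hp, mul_zero]
  have h4 : Polynomial.eval₂ (psi i0) (MvPolynomial.X i0) q = 0 := by
    apply IsFractionRing.injective (MvPolynomial C ℂ) (FF C)
    rw [← h2, ← h1, h3, map_zero]
  have h5 : q = 0 := by
    apply theta_injective i0
    simp only [Polynomial.coe_eval₂RingHom, map_zero]
    exact h4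
  have h6 : Polynomial.C (algebraMap (Amv i0) (Lf i0) (b : Amv i0)) * p = 0 := by
    rw [← IsScalarTower.algebraMap_smul (Lf i0) (b : Amv i0) p,
      Polynomial.smul_eq_C_mul] at hb
    rw [← hb, h5, Polynomial.map_zero]
  rcases mul_eq_zero.mp h6 with h | h
  · exact absurd (Polynomial.C_eq_zero.mp h)
      (IsFractionRing.to_map_ne_zero_of_mem_nonZeroDivisors b.prop)
  · exact h

lemma iota_C (l : Lf i0) : iota i0 (Polynomial.C l) = phi i0 l := by
  simp [iota]

lemma iota_X : iota i0 Polynomial.X = tv i0 := by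
  simp [iota]

end Phi

section PF

variable [DecidableEq C] (i0 : C)

lemma tv_mem_range (j : C) (h : j ≠ i0) : tv j ∈ (phi i0).fieldRange :=
  ⟨algebraMap (Amv i0) (Lf i0) (MvPolynomial.X ⟨j, h⟩), (tv_eq_phi i0 j h).symm⟩

lemma algC_mem_range (c : ℂ) : (algebraMap ℂ (FF C) c) ∈ (phi i0).fieldRange := by
  refine ⟨algebraMap (Amv i0) (Lf i0) (MvPolynomial.C c), ?_⟩
  rw [phi_algebraMap]
  have h1 : psi i0 (MvPolynomial.C c) = MvPolynomial.C c := by simp [psi]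
  rw [h1, IsScalarTower.algebraMap_apply ℂ (MvPolynomial C ℂ) (FF C) c,
    MvPolynomial.algebraMap_eq]

lemma smul_mem_range (c : ℂ) {x : FF C} (hx : x ∈ (phi i0).fieldRange) :
    c • x ∈ (phi i0).fieldRange := by
  have h : c • x = algebraMap ℂ (FF C) c * x := Algebra.smul_def c x
  rw [h]
  exact mul_mem (algC_mem_range i0 c) hx

lemma Eaux_mem_range (x : C) (hx : x ≠ i0) (w : List C) (hw : ∀ y ∈ w, y ≠ i0) :
    Eaux (tv x) w ∈ (phi i0).fieldRange := by
  induction w generalizing x with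
  | nil => exact one_mem _
  | cons y w ih =>
    have hy : y ≠ i0 := hw y (List.mem_cons_self : y ∈ y :: w)
    exact mul_mem (inv_mem (sub_mem (tv_mem_range i0 y hy) (tv_mem_range i0 x hx)))
      (ih y hy (fun z hz => hw z (List.mem_cons_of_mem y hz)))

lemma pf_indep (J : Finset C) (hJ : ∀ j ∈ J, j ≠ i0)
    (f : C → FF C) (hf : ∀ j ∈ J, f j ∈ (phi i0).fieldRange)
    (hsum : ∑ j ∈ J, f j * (tv j - tv i0)⁻¹ = 0) :
    ∀ j ∈ J, f j = 0 := by
  classical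
  -- lifts of f
  choose! gL hgL using hf
  -- the "variables" in Lf
  set aL : C → Lf i0 := fun j =>
    if h : j ≠ i0 then algebraMap (Amv i0) (Lf i0) (MvPolynomial.X ⟨j, h⟩) else 0 with haL
  have haL' : ∀ j (h : j ≠ i0), tv j = phi i0 (aL j) := by
    intro j h
    rw [haL]; simp only [dif_pos h]
    exact tv_eq_phi i0 j h
  have haL_inj : ∀ j ∈ J, ∀ k ∈ J, j ≠ k → aL k - aL j ≠ 0 := by
    intro j hj k hk hjk h0
    have hk' := hJ k hk; have hj' := hJ j hj
    rw [haL] at h0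
    simp only [dif_pos hk', dif_pos hj'] at h0
    rw [sub_eq_zero] at h0
    have := IsFractionRing.injective (Amv i0) (Lf i0) h0
    have := MvPolynomial.X_injective this
    exact hjk (congrArg Subtype.val this).symm
  set P : Polynomial (Lf i0) := ∑ j ∈ J, Polynomial.C (gL j)
    * ∏ k ∈ J.erase j, (Polynomial.C (aL k) - Polynomial.X) with hP
  have hiP : iota i0 P = (∑ j ∈ J, f j * (tv j - tv i0)⁻¹) * ∏ k ∈ J, (tv k - tv i0) := by
    rw [hP, map_sum, Finset.sum_mul]
    apply Finset.sum_congr rfl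
    intro j hj
    rw [map_mul, iota_C, hgL j hj, map_prod]
    have hterm : ∀ k ∈ J.erase j, iota i0 (Polynomial.C (aL k) - Polynomial.X)
        = tv k - tv i0 := by
      intro k hk
      have hsub : iota i0 (Polynomial.C (aL k) - Polynomial.X)
          = phi i0 (aL k) - tv i0 := by
        simp [iota]
      rw [hsub, ← haL' k (hJ k (Finset.mem_of_mem_erase hk))]
    rw [Finset.prod_congr rfl hterm]
    have hprod : ∏ k ∈ J.erase j, (tv k - tv i0)
        = (tv j - tv i0)⁻¹ * ∏ k ∈ J, (tv k - tv i0) := by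
      rw [← Finset.mul_prod_erase J _ hj, ← mul_assoc,
        inv_mul_cancel₀ (tv_sub_ne_zero (hJ j hj)), one_mul]
    rw [hprod]
    ring
  have hP0 : P = 0 := by
    apply iota_injective i0
    rw [hiP, hsum, zero_mul, map_zero]
  intro j hj
  have heval : Polynomial.eval (aL j) P = gL j * ∏ k ∈ J.erase j, (aL k - aL j) := by
    rw [hP, Polynomial.eval_finset_sum]
    rw [Finset.sum_eq_single j]
    · simp [Polynomial.eval_prod]
    · intro i hi hij
      have hji : j ∈ J.erase i := Finset.mem_erase.mpr ⟨(Ne.symm hij), hj⟩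
      simp only [Polynomial.eval_mul, Polynomial.eval_prod]
      rw [Finset.prod_eq_zero hji]
      · ring
      · simp
    · intro h; exact absurd hj h
  have h0 : gL j * ∏ k ∈ J.erase j, (aL k - aL j) = 0 := by
    rw [← heval, hP0, Polynomial.eval_zero]
  have hne : ∏ k ∈ J.erase j, (aL k - aL j) ≠ 0 := by
    apply Finset.prod_ne_zero_iff.mpr
    intro k hk
    exact haL_inj j hj k (Finset.mem_of_mem_erase hk) (Ne.symm (Finset.ne_of_mem_erase hk))
  have : gL j = 0 := by
    rcases mul_eq_zero.mp h0 with h | h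
    · exact h
    · exact absurd h hne
  rw [← hgL j hj, this, map_zero]

end PF

section Main

variable [DecidableEq C]

lemma perms_biUnion (M : List C) (hM : M ≠ []) :
    M.permutations.toFinset = M.toFinset.biUnion
      (fun j => ((M.erase j).permutations.toFinset).image (j :: ·)) := by
  ext w
  simp only [List.mem_toFinset, List.mem_permutations, Finset.mem_biUnion, Finset.mem_image,
    List.mem_toFinset, List.mem_permutations]
  constructor
  · intro h
    cases w with
    | nil => exact absurd (List.nil_perm.mp h) hM
    | cons a t =>
      obtain ⟨ha, ht⟩ := List.cons_perm_iff_perm_erase.mp h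
      exact ⟨a, ha, t, ht, rfl⟩
  · rintro ⟨j, hj, u, hu, rfl⟩
    exact List.cons_perm_iff_perm_erase.mpr ⟨hj, hu⟩

lemma perms_pairwise (M : List C) :
    (↑M.toFinset : Set C).PairwiseDisjoint
      (fun j => ((M.erase j).permutations.toFinset).image (j :: ·)) := by
  intro a _ b _ hab
  simp only [Function.onFun]
  rw [Finset.disjoint_left]
  rintro w hw hw'
  simp only [Finset.mem_image] at hw hw'
  obtain ⟨u, _, rfl⟩ := hw
  obtain ⟨u', _, he⟩ := hw'
  exact hab (List.cons.inj he).1.symm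

lemma liLemma : ∀ (n : ℕ) (M : List C), M.length = n → M.Nodup → ∀ i0, i0 ∉ M →
    LinearIndependent ℂ (fun w : {w : List C // w ∈ M.permutations.toFinset} =>
      Eaux (tv i0) w.val) := by
  intro n
  induction n with
  | zero =>
    intro M hlen hnd i0 _
    have hM : M = [] := List.length_eq_zero_iff.mp hlen
    subst hM
    haveI : Unique {w : List C // w ∈ ([] : List C).permutations.toFinset} :=
      ⟨⟨⟨[], by simp⟩⟩, fun j => Subtype.ext (by
        have := j.prop
        simp only [List.permutations_nil, List.mem_toFinset, List.mem_singleton] at this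
        simp [this])⟩
    rw [Fintype.linearIndependent_iff]
    intro g hg i
    rw [Fintype.sum_unique] at hg
    have hval : (default : {w : List C // w ∈ ([] : List C).permutations.toFinset}).val = [] := by
      have := (default : {w : List C // w ∈ ([] : List C).permutations.toFinset}).prop
      simpa using this
    rw [hval] at hg
    have h1 : Eaux (tv i0) ([] : List C) = 1 := rfl
    rw [h1, smul_eq_zero] at hg
    rcases hg with h | h
    · rw [Unique.eq_default i]; exact h
    · exact absurd h one_ne_zero
  | succ n ih =>
    intro M hlen hnd i0 hi0
    have hMne : M ≠ [] := by intro h; rw [h] at hlen; simp at hlen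
    rw [Fintype.linearIndependent_iff]
    intro g hg i
    set G : List C → ℂ := fun w =>
      if h : w ∈ M.permutations.toFinset then g ⟨w, h⟩ else 0 with hG
    have hGg : ∀ (w : List C) (h : w ∈ M.permutations.toFinset), G w = g ⟨w, h⟩ := by
      intro w h; rw [hG]; simp only [dif_pos h]
    have hsum0 : ∑ w ∈ M.permutations.toFinset, G w • Eaux (tv i0) w = 0 := by
      rw [← Finset.sum_attach M.permutations.toFinset (fun w => G w • Eaux (tv i0) w), ← hg,
        Finset.univ_eq_attach]
      apply Finset.sum_congr rfl
      intro x _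
      rw [hGg x.val x.prop]
    have hsum1 : ∑ j ∈ M.toFinset, (∑ u ∈ (M.erase j).permutations.toFinset,
        G (j :: u) • Eaux (tv j) u) * (tv j - tv i0)⁻¹ = 0 := by
      rw [← hsum0, perms_biUnion M hMne, Finset.sum_biUnion (perms_pairwise M)]
      apply Finset.sum_congr rfl
      intro j _
      rw [Finset.sum_mul, Finset.sum_image (fun x _ y _ h => (List.cons.inj h).2)]
      apply Finset.sum_congr rfl
      intro u _
      have he : Eaux (tv i0) (j :: u) = (tv j - tv i0)⁻¹ * Eaux (tv j) u := rfl
      rw [he, mul_comm ((tv j - tv i0)⁻¹), smul_mul_assoc]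
    have hf0 : ∀ j ∈ M.toFinset, (∑ u ∈ (M.erase j).permutations.toFinset,
        G (j :: u) • Eaux (tv j) u) = 0 := by
      apply pf_indep i0 M.toFinset
      · intro j hj he
        exact hi0 (he ▸ (List.mem_toFinset.mp hj))
      · intro j hj
        apply sum_mem
        intro u hu
        apply smul_mem_range
        have hju : ∀ y ∈ u, y ∈ M.erase j := by
          intro y hy
          exact (List.perm_of_mem_permutations (List.mem_toFinset.mp hu)).mem_iff.mp hy
        apply Eaux_mem_range i0 j (fun he => hi0 (he ▸ (List.mem_toFinset.mp hj))) u
        intro y hy he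
        exact hi0 (he ▸ (List.mem_of_mem_erase (hju y hy)))
      · exact hsum1
    rcases i with ⟨w, hw⟩
    have hwp : w.Perm M := List.mem_permutations.mp (List.mem_toFinset.mp hw)
    rw [← hGg w hw]
    cases w with
    | nil =>
      have hl := hwp.length_eq
      rw [hlen] at hl
      simp at hl
    | cons j u =>
      obtain ⟨hjM, hu⟩ := List.cons_perm_iff_perm_erase.mp hwp
      have hlen' : (M.erase j).length = n := by
        rw [List.length_erase_of_mem hjM, hlen]
        rfl
      have hli := ih (M.erase j) hlen' (hnd.erase j) j (hnd.not_mem_erase)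
      rw [Fintype.linearIndependent_iff] at hli
      have hmemu : u ∈ (M.erase j).permutations.toFinset := by
        rw [List.mem_toFinset, List.mem_permutations]; exact hu
      have hcond : ∑ x : {w : List C // w ∈ (M.erase j).permutations.toFinset},
          G (j :: x.val) • Eaux (tv j) x.val = 0 := by
        rw [Finset.univ_eq_attach,
          Finset.sum_attach ((M.erase j).permutations.toFinset)
            (fun w => G (j :: w) • Eaux (tv j) w)]
        exact hf0 j (List.mem_toFinset.mpr hjM)
      exact hli (fun x => G (j :: x.val)) hcond ⟨u, hmemu⟩

end Main

section Span

variable [DecidableEq C]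

lemma spanLemma : ∀ (n : ℕ) (M : List C), M.length = n → M.Nodup →
    ∀ j ∈ M, ∀ w ∈ M.permutations.toFinset,
    Eplain w ∈ Submodule.span ℂ (Set.range
      (fun vI : {l : List C // l ∈ M.permutations.toFinset ∧ l.head? = some j} =>
        Eplain vI.val)) := by
  intro n
  induction n with
  | zero =>
    intro M hlen hnd j hj
    have hM : M = [] := List.length_eq_zero_iff.mp hlen
    subst hM
    simp at hj
  | succ n ih =>
    intro M hlen hnd j hjM w hw
    have hwp : w.Perm M := List.mem_permutations.mp (List.mem_toFinset.mp hw)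
    have hwnd : w.Nodup := (hwp.nodup_iff).mpr hnd
    cases w with
    | nil =>
      have hl := hwp.length_eq
      rw [hlen] at hl
      simp at hl
    | cons a t =>
      by_cases haj : a = j
      · subst haj
        exact Submodule.subset_span ⟨⟨a :: t, hw, rfl⟩, rfl⟩
      · have hjw : j ∈ t := by
          have hj2 : j ∈ a :: t := hwp.mem_iff.mpr hjM
          rcases List.mem_cons.mp hj2 with h | h
          · exact absurd h.symm haj
          · exact h
        obtain ⟨p, q, rfl⟩ := List.append_of_mem hjw
        have hdel := del_id a p j q hwnd
        rw [hdel]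
        have hperm' : (a :: (p ++ q)).Perm (M.erase j) := by
          have h1 : ((a :: p) ++ j :: q).Perm (j :: ((a :: p) ++ q)) := List.perm_middle
          have h1' : (a :: (p ++ j :: q)).Perm (j :: (a :: (p ++ q))) := by simpa using h1
          have h2 := h1'.symm.trans hwp
          exact (List.cons_perm_iff_perm_erase.mp h2).2
        have hlen' : (M.erase j).length = n := by
          rw [List.length_erase_of_mem hjM, hlen]
          rfl
        have hmem' : (a :: (p ++ q)) ∈ (M.erase j).permutations.toFinset := by
          rw [List.mem_toFinset, List.mem_permutations]
          exact hperm'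
        -- the key multiplication step
        have key : ∀ k ∈ M.erase j, (tv j - tv k)⁻¹ * Eplain (a :: (p ++ q)) ∈
            Submodule.span ℂ (Set.range
              (fun vI : {l : List C // l ∈ M.permutations.toFinset ∧ l.head? = some j} =>
                Eplain vI.val)) := by
          intro k hk
          have h := ih (M.erase j) hlen' (hnd.erase j) k hk (a :: (p ++ q)) hmem'
          have step : ∀ z ∈ Set.range
              (fun vI : {l : List C // l ∈ (M.erase j).permutations.toFinset ∧
                  l.head? = some k} => Eplain vI.val),
              (tv j - tv k)⁻¹ * z ∈ Submodule.span ℂ (Set.range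
                (fun vI : {l : List C // l ∈ M.permutations.toFinset ∧ l.head? = some j} =>
                  Eplain vI.val)) := by
            rintro z ⟨⟨v, hv, hvhead⟩, rfl⟩
            have hvc : k :: v.tail = v := List.cons_head?_tail hvhead
            have hjkv : (j :: v) ∈ M.permutations.toFinset := by
              rw [List.mem_toFinset, List.mem_permutations]
              exact List.cons_perm_iff_perm_erase.mpr
                ⟨hjM, List.mem_permutations.mp (List.mem_toFinset.mp hv)⟩
            have hhead2 : (j :: v).head? = some j := rfl
            have hkj : k ≠ j := ((List.Nodup.mem_erase_iff hnd).mp hk).1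
            have hne2 : tv k - tv j ≠ 0 := tv_sub_ne_zero hkj
            have hEq : (tv j - tv k)⁻¹ * Eplain v = (-1 : ℂ) • Eplain (j :: v) := by
              conv_lhs => rw [← hvc]
              conv_rhs => rw [← hvc]
              have h1 : Eplain (j :: (k :: v.tail))
                  = (tv k - tv j)⁻¹ * Eplain (k :: v.tail) := rfl
              have h2 : (tv j - tv k)⁻¹ = -((tv k - tv j)⁻¹) := by
                apply inv_eq_of_mul_eq_one_right
                have hm : (tv j - tv k) * -(tv k - tv j)⁻¹
                    = (tv k - tv j) * (tv k - tv j)⁻¹ := by ring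
                rw [hm, mul_inv_cancel₀ hne2]
              rw [h1, h2]
              have hnm : -(tv k - tv j)⁻¹ * Eplain (k :: v.tail)
                  = -((tv k - tv j)⁻¹ * Eplain (k :: v.tail)) :=
                neg_mul ((tv k - tv j)⁻¹) (Eplain (k :: v.tail))
              have hns : (-1 : ℂ) • ((tv k - tv j)⁻¹ * Eplain (k :: v.tail))
                  = -((tv k - tv j)⁻¹ * Eplain (k :: v.tail)) :=
                neg_one_smul ℂ ((tv k - tv j)⁻¹ * Eplain (k :: v.tail))
              rw [hnm, hns]
            show (tv j - tv k)⁻¹ * Eplain v ∈ _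
            rw [hEq]
            exact Submodule.smul_mem _ _
              (Submodule.subset_span ⟨⟨j :: v, hjkv, hhead2⟩, rfl⟩)
          refine Submodule.span_induction step ?_ ?_ ?_ h
          · rw [mul_zero]; exact Submodule.zero_mem _
          · intro x y _ _ hx hy
            rw [mul_add]; exact Submodule.add_mem _ hx hy
          · intro c x _ hx
            rw [mul_smul_comm]; exact Submodule.smul_mem _ _ hx
        -- memberships of the endpoints
        have hxw : p.getLastD a ∈ M.erase j := by
          apply hperm'.mem_iff.mp
          rcases List.mem_cons.mp (List.getLastD_mem_cons : p.getLastD a ∈ a :: p) with h | h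
          · rw [h]; exact (List.mem_cons_self : a ∈ a :: (p ++ q))
          · exact List.mem_cons_of_mem a (List.mem_append_left q h)
        rcases q with _ | ⟨y, q'⟩
        · have hdc : delC (p.getLastD a) j [] = (tv j - tv (p.getLastD a))⁻¹ := by
            simp [delC]
          rw [hdc]
          exact key _ hxw
        · have hyw : y ∈ M.erase j := by
            apply hperm'.mem_iff.mp
            exact List.mem_cons_of_mem a (List.mem_append_right p (List.mem_cons_self : y ∈ y :: q'))
          have hdc : delC (p.getLastD a) j (y :: q') * Eplain (a :: (p ++ y :: q'))
              = (tv j - tv (p.getLastD a))⁻¹ * Eplain (a :: (p ++ y :: q'))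
                - (tv j - tv y)⁻¹ * Eplain (a :: (p ++ y :: q')) := by
            have hyj : y ≠ j := ((List.Nodup.mem_erase_iff hnd).mp hyw).1
            have hne4 : tv j - tv y ≠ 0 := tv_sub_ne_zero (Ne.symm hyj)
            have h2 : (tv y - tv j)⁻¹ = -((tv j - tv y)⁻¹) := by
              apply inv_eq_of_mul_eq_one_right
              have hm : (tv y - tv j) * -(tv j - tv y)⁻¹
                  = (tv j - tv y) * (tv j - tv y)⁻¹ := by ring
              rw [hm, mul_inv_cancel₀ hne4]
            have h3 : delC (p.getLastD a) j (y :: q')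
                = (tv j - tv (p.getLastD a))⁻¹ + (tv y - tv j)⁻¹ := by
              simp [delC]
            rw [h3, h2]
            ring
          rw [hdc]
          exact sub_mem (key _ hxw) (key _ hyw)

lemma tail_mem (vL : List C) (i0 : C) (l : List C)
    (hv : l ∈ vL.permutations.toFinset) (hhead : l.head? = some i0) :
    l.tail ∈ (vL.erase i0).permutations.toFinset := by
  have hvc : i0 :: l.tail = l := List.cons_head?_tail hhead
  rw [List.mem_toFinset, List.mem_permutations]
  have hvp : l.Perm vL := List.mem_permutations.mp (List.mem_toFinset.mp hv)
  rw [← hvc] at hvp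
  exact (List.cons_perm_iff_perm_erase.mp hvp).2

end Span


theorem statement9 {C : Type} [Fintype C] [DecidableEq C]
    (vL : List C) (hnd : vL.Nodup) (hne : vL ≠ [])
    (i0 : C) (hi0 : i0 ∈ vL.toFinset) :
    LinearIndependent ℂ
      (fun vI : {l : List C // l ∈ vL.permutations.toFinset ∧ l.head? = some i0} =>
        Eplain vI.val) ∧
    ∀ vJ ∈ vL.permutations.toFinset,
      Eplain vJ ∈ Submodule.span ℂ
        (Set.range (fun vI : {l : List C // l ∈ vL.permutations.toFinset ∧
            l.head? = some i0} => Eplain vI.val)) := by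
  constructor
  · -- linear independence
    have hLI := liLemma (vL.erase i0).length (vL.erase i0) rfl (hnd.erase i0) i0
      (hnd.not_mem_erase)
    have hinj : Function.Injective
        (fun l : {l : List C // l ∈ vL.permutations.toFinset ∧ l.head? = some i0} =>
          (⟨l.val.tail, tail_mem vL i0 l.val l.prop.1 l.prop.2⟩ :
            {w : List C // w ∈ (vL.erase i0).permutations.toFinset})) := by
      intro l1 l2 h
      apply Subtype.ext
      have h1 : i0 :: l1.val.tail = l1.val := List.cons_head?_tail l1.prop.2
      have h2 : i0 :: l2.val.tail = l2.val := List.cons_head?_tail l2.prop.2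
      have ht : l1.val.tail = l2.val.tail := congrArg Subtype.val h
      rw [← h1, ← h2, ht]
    have hcomp : (fun vI : {l : List C // l ∈ vL.permutations.toFinset ∧
        l.head? = some i0} => Eplain vI.val)
        = (fun w : {w : List C // w ∈ (vL.erase i0).permutations.toFinset} =>
            Eaux (tv i0) w.val)
          ∘ (fun l : {l : List C // l ∈ vL.permutations.toFinset ∧ l.head? = some i0} =>
            (⟨l.val.tail, tail_mem vL i0 l.val l.prop.1 l.prop.2⟩ :
              {w : List C // w ∈ (vL.erase i0).permutations.toFinset})) := by
      funext l
      obtain ⟨v, hv, hhead⟩ := l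
      have hvc : i0 :: v.tail = v := List.cons_head?_tail hhead
      show Eplain v = Eaux (tv i0) v.tail
      conv_lhs => rw [← hvc]
      rfl
    rw [hcomp]
    exact hLI.comp _ hinj
  · intro vJ hvJ
    exact spanLemma vL.length vL rfl hnd i0 (List.mem_toFinset.mp hi0) vJ hvJ

end
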